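/- arXiv:1707.00583 — 2 statements merged into one kernel-verified Lean document; each statement's English description precedes it below -/
import Mathlib

section
/- Every closed convex cone in ℝ² is finitely generated (polyhedral). -/
open Filter Topology

def coneHull {E : Type*} [AddCommMonoid E] [Module ℝ E] (S : Set E) : Set E :=
  {x | ∃ (k : ℕ) (a : Fin k → ℝ) (v : Fin k → E),
    (∀ i, 0 ≤ a i) ∧ (∀ i, v i ∈ S) ∧ x = ∑ i, a i • v i}

section helpers
variable {E : Type*} [AddCommMonoid E] [Module ℝ E]

lemma zero_mem_coneHull (S : Set E) : (0:E) ∈ coneHull S :=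
  ⟨0, ![], ![], by intro i; exact i.elim0, by intro i; exact i.elim0, by simp⟩

lemma mem_coneHull_one (S : Set E) {g1 : E} (h1 : g1 ∈ S) {c1 : ℝ} (hc1 : 0 ≤ c1) :
    c1 • g1 ∈ coneHull S :=
  ⟨1, ![c1], ![g1], by intro i; fin_cases i <;> simpa, by intro i; fin_cases i <;> simpa,
   by simp⟩

lemma mem_coneHull_two (S : Set E) {g1 g2 : E} (h1 : g1 ∈ S) (h2 : g2 ∈ S) {c1 c2 : ℝ}
    (hc1 : 0 ≤ c1) (hc2 : 0 ≤ c2) : c1 • g1 + c2 • g2 ∈ coneHull S :=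
  ⟨2, ![c1, c2], ![g1, g2], by intro i; fin_cases i <;> simpa,
   by intro i; fin_cases i <;> simpa, by simp [Fin.sum_univ_two]⟩

lemma mem_coneHull_three (S : Set E) {g1 g2 g3 : E} (h1 : g1 ∈ S) (h2 : g2 ∈ S) (h3 : g3 ∈ S)
    {c1 c2 c3 : ℝ} (hc1 : 0 ≤ c1) (hc2 : 0 ≤ c2) (hc3 : 0 ≤ c3) :
    c1 • g1 + c2 • g2 + c3 • g3 ∈ coneHull S :=
  ⟨3, ![c1, c2, c3], ![g1, g2, g3], by intro i; fin_cases i <;> simpa,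
   by intro i; fin_cases i <;> simpa, by simp [Fin.sum_univ_three]⟩

lemma cone_sum_mem {C : Set E} (h0 : (0:E) ∈ C)
    (hc : ∀ u ∈ C, ∀ v ∈ C, ∀ a b : ℝ, 0 ≤ a → 0 ≤ b → a • u + b • v ∈ C) :
    ∀ (k : ℕ) (a : Fin k → ℝ) (v : Fin k → E), (∀ i, 0 ≤ a i) → (∀ i, v i ∈ C) →
      ∑ i, a i • v i ∈ C := by
  intro k
  induction k with
  | zero => intro a v _ _; simpa using h0
  | succ n ih =>
    intro a v ha hv
    have h := hc (v 0) (hv 0) (∑ i : Fin n, a i.succ • v i.succ)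
      (ih (fun i => a i.succ) (fun i => v i.succ) (fun i => ha _) (fun i => hv _))
      (a 0) 1 (ha 0) zero_le_one
    simpa [Fin.sum_univ_succ] using h

lemma coneHull_min {S C : Set E} (hS : S ⊆ C) (h0 : (0:E) ∈ C)
    (hc : ∀ u ∈ C, ∀ v ∈ C, ∀ a b : ℝ, 0 ≤ a → 0 ≤ b → a • u + b • v ∈ C) :
    coneHull S ⊆ C := by
  rintro x ⟨k, a, v, ha, hv, rfl⟩
  exact cone_sum_mem h0 hc k a v ha (fun i => hS (hv i))

end helpers

section keys
variable {E : Type*} [AddCommGroup E] [Module ℝ E]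

lemma key2 (vb w : E) (c1 c2 a b : ℝ) :
    c1 • (vb + a • w) + c2 • (vb + b • w) = (c1 + c2) • vb + (c1 * a + c2 * b) • w := by
  module

lemma key1w (vb w : E) (c1 c2 a : ℝ) :
    c1 • (vb + a • w) + c2 • w = c1 • vb + (c1 * a + c2) • w := by module

lemma key1w' (vb w : E) (c1 c2 a : ℝ) :
    c1 • (vb + a • w) + c2 • (-w) = c1 • vb + (c1 * a - c2) • w := by module

lemma key3 (vb w : E) (c1 c2 c3 t0 : ℝ) :
    c1 • (vb + t0 • w) + c2 • w + c3 • (-w) = c1 • vb + (c1 * t0 + c2 - c3) • w := by module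

end keys

lemma tend_mem (C : Set (Fin 2 → ℝ)) (hclosed : IsClosed C) (vb z : Fin 2 → ℝ)
    (h : ∀ m : ℕ, ∃ c : ℝ, |c| ≤ 1 / (m + 1) ∧ c • vb + z ∈ C) : z ∈ C := by
  choose c hc1 hc2 using h
  have h0 : Tendsto c atTop (𝓝 0) :=
    squeeze_zero_norm (fun n => by simpa using hc1 n) tendsto_one_div_add_atTop_nhds_zero_nat
  have h1 : Tendsto (fun m => c m • vb + z) atTop (𝓝 z) := by
    have := (h0.smul_const vb).add (tendsto_const_nhds (x := z))
    simpa using this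
  exact hclosed.mem_of_tendsto h1 (Filter.Eventually.of_forall hc2)

lemma main_aux (C : Set (Fin 2 → ℝ))
    (hcone : ∀ u ∈ C, ∀ v ∈ C, ∀ a b : ℝ, 0 ≤ a → 0 ≤ b → a • u + b • v ∈ C)
    (h0 : (0 : Fin 2 → ℝ) ∈ C) (hclosed : IsClosed C)
    (vb w : Fin 2 → ℝ) (g τ : (Fin 2 → ℝ) → ℝ)
    (hdec : ∀ x, x = g x • vb + τ x • w)
    (hg : ∀ y ∈ C, 0 ≤ g y) :
    ∃ G : Finset (Fin 2 → ℝ), C = coneHull (G : Set (Fin 2 → ℝ)) := by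
  classical
  have hscale : ∀ z ∈ C, ∀ r : ℝ, 0 ≤ r → r • z ∈ C := by
    intro z hz r hr
    have := hcone z hz 0 h0 r 0 hr le_rfl
    simpa using this
  set K : Set ℝ := {t : ℝ | vb + t • w ∈ C} with hKdef
  have mem_K : ∀ t : ℝ, t ∈ K ↔ vb + t • w ∈ C := fun t => Iff.rfl
  have hKclosed : IsClosed K := by
    rw [hKdef]
    exact hclosed.preimage (continuous_const.add (continuous_id.smul continuous_const))
  have hgrow : ∀ t ∈ K, ∀ s : ℝ, s • w ∈ C → ∀ r : ℝ, 0 ≤ r → t + r * s ∈ K := by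
    intro t ht s hs r hr
    rw [mem_K] at ht ⊢
    have hmem := hcone _ ht _ hs 1 r zero_le_one hr
    have heq : (1:ℝ) • (vb + t • w) + r • (s • w) = vb + (t + r * s) • w := by module
    rwa [heq] at hmem
  have hNBA : ∀ t ∈ K, ∀ s : ℝ, s • w ∈ C → 0 < s → ¬ BddAbove K := by
    intro t ht s hs hspos
    rintro ⟨b, hb⟩
    have htb : t ≤ b := hb ht
    have h1 : t + ((b - t + 1)/s) * s ∈ K := hgrow t ht s hs _ (div_nonneg (by linarith) hspos.le)
    have hs0 : s ≠ 0 := ne_of_gt hspos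
    have h2 : t + ((b - t + 1)/s) * s = b + 1 := by field_simp; ring
    rw [h2] at h1
    have := hb h1
    linarith
  have hNBB : ∀ t ∈ K, ∀ s : ℝ, s • w ∈ C → s < 0 → ¬ BddBelow K := by
    intro t ht s hs hsneg
    rintro ⟨b, hb⟩
    have htb : b ≤ t := hb ht
    have hs0 : s ≠ 0 := ne_of_lt hsneg
    have h1 : t + ((t - b + 1)/(-s)) * s ∈ K :=
      hgrow t ht s hs _ (div_nonneg (by linarith) (by linarith))
    have hs0' : -s ≠ 0 := neg_ne_zero.mpr hs0
    have h2 : t + ((t - b + 1)/(-s)) * s = b - 1 := by field_simp; ring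
    rw [h2] at h1
    have := hb h1
    linarith
  have hKmem : ∀ x ∈ C, 0 < g x → τ x / g x ∈ K := by
    intro x hx hgx
    have h1 : (g x)⁻¹ • x ∈ C := hscale x hx _ (by positivity)
    have h2 : (g x)⁻¹ • x = vb + (τ x / g x) • w := by
      have h3 : (g x)⁻¹ • (g x • vb + τ x • w) = vb + (τ x / g x) • w := by
        rw [smul_add, smul_smul, smul_smul, inv_mul_cancel₀ (ne_of_gt hgx), one_smul,
          inv_mul_eq_div]
      rw [← hdec x] at h3
      exact h3
    rw [mem_K]
    rwa [h2] at h1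
  have hline : ∀ x ∈ C, g x = 0 → x = τ x • w := by
    intro x hx hgx
    have h := hdec x
    rwa [hgx, zero_smul, zero_add] at h
  have hTK : ∀ x ∈ C, g x = 0 → τ x • w ∈ C := by
    intro x hx h
    rw [← hline x hx h]; exact hx
  have hwmem : ¬ BddAbove K → w ∈ C := by
    intro hna
    apply tend_mem C hclosed vb w
    intro m
    rw [not_bddAbove_iff] at hna
    obtain ⟨t, htK, htm⟩ := hna ((m:ℝ) + 1)
    have hm1 : (0:ℝ) < (m:ℝ) + 1 := by positivity
    have htpos : (0:ℝ) < t := lt_trans hm1 htm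
    refine ⟨1/t, ?_, ?_⟩
    · rw [abs_of_pos (by positivity)]
      exact one_div_le_one_div_of_le hm1 htm.le
    · have h1 : (1/t) • (vb + t • w) ∈ C := hscale _ ((mem_K t).mp htK) _ (by positivity)
      have heq : (1/t) • (vb + t • w) = (1/t) • vb + w := by
        rw [smul_add, smul_smul, show (1/t) * t = 1 by field_simp, one_smul]
      rwa [heq] at h1
  have hwmem' : ¬ BddBelow K → (-w) ∈ C := by
    intro hnb
    apply tend_mem C hclosed vb (-w)
    intro m
    rw [not_bddBelow_iff] at hnb
    obtain ⟨t, htK, htm⟩ := hnb (-((m:ℝ) + 1))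
    have hm1 : (0:ℝ) < (m:ℝ) + 1 := by positivity
    have htneg : t < 0 := by linarith
    have ht0 : t ≠ 0 := ne_of_lt htneg
    refine ⟨-(1/t), ?_, ?_⟩
    · have h1t : 1/t < 0 := one_div_neg.mpr htneg
      rw [abs_of_pos (by linarith), show -(1/t) = 1/(-t) by ring]
      exact one_div_le_one_div_of_le hm1 (by linarith)
    · have h1 : (1/(-t)) • (vb + t • w) ∈ C :=
        hscale _ ((mem_K t).mp htK) _ (le_of_lt (one_div_pos.mpr (by linarith)))
      have heq : (1/(-t)) • (vb + t • w) = (-(1/t)) • vb + (-w) := by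
        rw [smul_add, smul_smul, show (1/(-t)) * t = -1 by field_simp,
          show (1/(-t)) = -(1/t) by ring, neg_one_smul]
      rwa [heq] at h1
  by_cases hKne : K.Nonempty
  · -- K nonempty
    by_cases hA : BddAbove K
    · by_cases hB : BddBelow K
      · -- both bounded
        have haK : sInf K ∈ K := hKclosed.csInf_mem hKne hB
        have hbK : sSup K ∈ K := hKclosed.csSup_mem hKne hA
        refine ⟨{vb + sInf K • w, vb + sSup K • w}, ?_⟩
        ext x
        constructor
        · intro hx
          rcases (hg x hx).lt_or_eq with hgx | hgx
          · have htK := hKmem x hx hgx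
            have hgx0 : g x ≠ 0 := ne_of_gt hgx
            have hta : sInf K ≤ τ x / g x := csInf_le hB htK
            have htb : τ x / g x ≤ sSup K := le_csSup hA htK
            rcases eq_or_lt_of_le (hta.trans htb) with hab | hab
            · have hts : τ x / g x = sInf K := le_antisymm (by rw [hab]; exact htb) hta
              have hxe : x = g x • (vb + sInf K • w) + (0:ℝ) • (vb + sSup K • w) := by
                rw [zero_smul, add_zero, smul_add, smul_smul,
                  show g x * sInf K = τ x by rw [← hts]; field_simp]
                exact hdec x
              rw [hxe]
              exact mem_coneHull_two _ (by simp) (by simp) hgx.le le_rfl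
            · have hba : sSup K - sInf K ≠ 0 := sub_ne_zero.mpr (ne_of_gt hab)
              have hxe : x = (g x * (sSup K - τ x / g x)/(sSup K - sInf K)) • (vb + sInf K • w)
                  + (g x * (τ x / g x - sInf K)/(sSup K - sInf K)) • (vb + sSup K • w) := by
                rw [key2,
                  show g x * (sSup K - τ x / g x)/(sSup K - sInf K)
                      + g x * (τ x / g x - sInf K)/(sSup K - sInf K) = g x by field_simp; try ring,
                  show (g x * (sSup K - τ x / g x)/(sSup K - sInf K)) * sInf K
                      + (g x * (τ x / g x - sInf K)/(sSup K - sInf K)) * sSup K = τ x by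
                    field_simp; ring]
                exact hdec x
              rw [hxe]
              exact mem_coneHull_two _ (by simp) (by simp)
                (div_nonneg (mul_nonneg hgx.le (by linarith)) (by linarith))
                (div_nonneg (mul_nonneg hgx.le (by linarith)) (by linarith))
          · have hτ0 : τ x = 0 := by
              rcases lt_trichotomy (τ x) 0 with h | h | h
              · exact absurd hB (hNBB _ haK (τ x) (hTK x hx hgx.symm) h)
              · exact h
              · exact absurd hA (hNBA _ haK (τ x) (hTK x hx hgx.symm) h)
            have hx0 : x = 0 := by rw [hline x hx hgx.symm, hτ0, zero_smul]
            rw [hx0]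
            exact zero_mem_coneHull _
        · intro hx
          refine coneHull_min ?_ h0 hcone hx
          intro y hy
          simp only [Finset.coe_insert, Finset.coe_singleton, Set.mem_insert_iff,
            Set.mem_singleton_iff] at hy
          rcases hy with rfl | rfl
          · exact (mem_K _).mp haK
          · exact (mem_K _).mp hbK
      · -- bounded above, unbounded below
        have hbK : sSup K ∈ K := hKclosed.csSup_mem hKne hA
        have hwC' : (-w) ∈ C := hwmem' hB
        refine ⟨{vb + sSup K • w, -w}, ?_⟩
        ext x
        constructor
        · intro hx
          rcases (hg x hx).lt_or_eq with hgx | hgx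
          · have htK := hKmem x hx hgx
            have hgx0 : g x ≠ 0 := ne_of_gt hgx
            have htb : τ x / g x ≤ sSup K := le_csSup hA htK
            have hxe : x = g x • (vb + sSup K • w) + (g x * (sSup K - τ x / g x)) • (-w) := by
              rw [key1w',
                show g x * sSup K - g x * (sSup K - τ x / g x) = τ x by field_simp; try ring]
              exact hdec x
            rw [hxe]
            exact mem_coneHull_two _ (by simp) (by simp) hgx.le
              (mul_nonneg hgx.le (by linarith))
          · have hτ0 : τ x ≤ 0 := by
              by_contra hcon
              push_neg at hcon
              exact absurd hA (hNBA _ hbK (τ x) (hTK x hx hgx.symm) hcon)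
            have hxe : x = (0:ℝ) • (vb + sSup K • w) + (-τ x) • (-w) := by
              rw [zero_smul, zero_add, neg_smul_neg]
              exact hline x hx hgx.symm
            rw [hxe]
            exact mem_coneHull_two _ (by simp) (by simp) le_rfl (by linarith)
        · intro hx
          refine coneHull_min ?_ h0 hcone hx
          intro y hy
          simp only [Finset.coe_insert, Finset.coe_singleton, Set.mem_insert_iff,
            Set.mem_singleton_iff] at hy
          rcases hy with rfl | rfl
          · exact (mem_K _).mp hbK
          · exact hwC'
    · by_cases hB : BddBelow K
      · -- bounded below, unbounded above
        have haK : sInf K ∈ K := hKclosed.csInf_mem hKne hB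
        have hwC : w ∈ C := hwmem hA
        refine ⟨{vb + sInf K • w, w}, ?_⟩
        ext x
        constructor
        · intro hx
          rcases (hg x hx).lt_or_eq with hgx | hgx
          · have htK := hKmem x hx hgx
            have hgx0 : g x ≠ 0 := ne_of_gt hgx
            have hta : sInf K ≤ τ x / g x := csInf_le hB htK
            have hxe : x = g x • (vb + sInf K • w) + (g x * (τ x / g x - sInf K)) • w := by
              rw [key1w,
                show g x * sInf K + g x * (τ x / g x - sInf K) = τ x by field_simp; try ring]
              exact hdec x
            rw [hxe]
            exact mem_coneHull_two _ (by simp) (by simp) hgx.le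
              (mul_nonneg hgx.le (by linarith))
          · have hτ0 : 0 ≤ τ x := by
              by_contra hcon
              push_neg at hcon
              exact absurd hB (hNBB _ haK (τ x) (hTK x hx hgx.symm) hcon)
            have hxe : x = (0:ℝ) • (vb + sInf K • w) + τ x • w := by
              rw [zero_smul, zero_add]
              exact hline x hx hgx.symm
            rw [hxe]
            exact mem_coneHull_two _ (by simp) (by simp) le_rfl hτ0
        · intro hx
          refine coneHull_min ?_ h0 hcone hx
          intro y hy
          simp only [Finset.coe_insert, Finset.coe_singleton, Set.mem_insert_iff,
            Set.mem_singleton_iff] at hy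
          rcases hy with rfl | rfl
          · exact (mem_K _).mp haK
          · exact hwC
      · -- unbounded in both directions
        obtain ⟨t0, ht0⟩ := hKne
        have hwC : w ∈ C := hwmem hA
        have hwC' : (-w) ∈ C := hwmem' hB
        refine ⟨{vb + t0 • w, w, -w}, ?_⟩
        ext x
        constructor
        · intro hx
          rcases (hg x hx).lt_or_eq with hgx | hgx
          · have hgx0 : g x ≠ 0 := ne_of_gt hgx
            rcases le_or_gt t0 (τ x / g x) with h | h
            · have hxe : x = g x • (vb + t0 • w) + (g x * (τ x / g x - t0)) • w
                  + (0:ℝ) • (-w) := by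
                rw [key3,
                  show g x * t0 + g x * (τ x / g x - t0) - 0 = τ x by field_simp; try ring]
                exact hdec x
              rw [hxe]
              exact mem_coneHull_three _ (by simp) (by simp) (by simp) hgx.le
                (mul_nonneg hgx.le (by linarith)) le_rfl
            · have hxe : x = g x • (vb + t0 • w) + (0:ℝ) • w
                  + (g x * (t0 - τ x / g x)) • (-w) := by
                rw [key3,
                  show g x * t0 + 0 - g x * (t0 - τ x / g x) = τ x by field_simp; try ring]
                exact hdec x
              rw [hxe]
              exact mem_coneHull_three _ (by simp) (by simp) (by simp) hgx.le le_rfl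
                (mul_nonneg hgx.le (by linarith))
          · rcases le_or_gt 0 (τ x) with h | h
            · have hxe : x = (0:ℝ) • (vb + t0 • w) + τ x • w + (0:ℝ) • (-w) := by
                rw [zero_smul, zero_smul, zero_add, add_zero]
                exact hline x hx hgx.symm
              rw [hxe]
              exact mem_coneHull_three _ (by simp) (by simp) (by simp) le_rfl h le_rfl
            · have hxe : x = (0:ℝ) • (vb + t0 • w) + (0:ℝ) • w + (-τ x) • (-w) := by
                rw [zero_smul, zero_smul, zero_add, zero_add, neg_smul_neg]
                exact hline x hx hgx.symm
              rw [hxe]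
              exact mem_coneHull_three _ (by simp) (by simp) (by simp) le_rfl le_rfl
                (by linarith)
        · intro hx
          refine coneHull_min ?_ h0 hcone hx
          intro y hy
          simp only [Finset.coe_insert, Finset.coe_singleton, Set.mem_insert_iff,
            Set.mem_singleton_iff] at hy
          rcases hy with rfl | rfl | rfl
          · exact (mem_K _).mp ht0
          · exact hwC
          · exact hwC'
  · -- K is empty : C lies on the line spanned by w
    have hC0 : ∀ x ∈ C, g x = 0 := by
      intro x hx
      rcases (hg x hx).lt_or_eq with h | h
      · exact absurd ⟨_, hKmem x hx h⟩ hKne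
      · exact h.symm
    have hwC_of : (∃ s : ℝ, 0 < s ∧ s • w ∈ C) → w ∈ C := by
      rintro ⟨s, hs, hsw⟩
      have := hscale _ hsw s⁻¹ (le_of_lt (by positivity))
      rwa [smul_smul, inv_mul_cancel₀ hs.ne', one_smul] at this
    have hwC_of' : (∃ s : ℝ, s < 0 ∧ s • w ∈ C) → (-w) ∈ C := by
      rintro ⟨s, hs, hsw⟩
      have hs0 : s ≠ 0 := ne_of_lt hs
      have := hscale _ hsw (-s)⁻¹ (le_of_lt (inv_pos.mpr (by linarith)))
      rwa [smul_smul, show (-s)⁻¹ * s = -1 by rw [show (-s)⁻¹ = -s⁻¹ by ring, neg_mul,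
        inv_mul_cancel₀ hs0], neg_one_smul] at this
    by_cases hpos : ∃ s : ℝ, 0 < s ∧ s • w ∈ C
    · by_cases hneg : ∃ s : ℝ, s < 0 ∧ s • w ∈ C
      · -- both directions : G = {w, -w}
        have hwC := hwC_of hpos
        have hwC' := hwC_of' hneg
        refine ⟨{w, -w}, ?_⟩
        ext x
        constructor
        · intro hx
          have hx2 := hline x hx (hC0 x hx)
          rcases le_or_gt 0 (τ x) with h | h
          · have hxe : x = τ x • w + (0:ℝ) • (-w) := by rw [zero_smul, add_zero]; exact hx2
            rw [hxe]
            exact mem_coneHull_two _ (by simp) (by simp) h le_rfl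
          · have hxe : x = (0:ℝ) • w + (-τ x) • (-w) := by
              rw [zero_smul, zero_add, neg_smul_neg]; exact hx2
            rw [hxe]
            exact mem_coneHull_two _ (by simp) (by simp) le_rfl (by linarith)
        · intro hx
          refine coneHull_min ?_ h0 hcone hx
          intro y hy
          simp only [Finset.coe_insert, Finset.coe_singleton, Set.mem_insert_iff,
            Set.mem_singleton_iff] at hy
          rcases hy with rfl | rfl
          · exact hwC
          · exact hwC'
      · -- only positive direction : G = {w}
        have hwC := hwC_of hpos
        refine ⟨{w}, ?_⟩
        ext x
        constructor
        · intro hx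
          have hx2 := hline x hx (hC0 x hx)
          have hτ : 0 ≤ τ x := by
            by_contra hcon
            push_neg at hcon
            exact hneg ⟨τ x, hcon, hTK x hx (hC0 x hx)⟩
          rw [hx2]
          exact mem_coneHull_one _ (by simp) hτ
        · intro hx
          refine coneHull_min ?_ h0 hcone hx
          intro y hy
          simp only [Finset.coe_singleton, Set.mem_singleton_iff] at hy
          rw [hy]; exact hwC
    · by_cases hneg : ∃ s : ℝ, s < 0 ∧ s • w ∈ C
      · -- only negative direction : G = {-w}
        have hwC' := hwC_of' hneg
        refine ⟨{-w}, ?_⟩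
        ext x
        constructor
        · intro hx
          have hx2 := hline x hx (hC0 x hx)
          have hτ : τ x ≤ 0 := by
            by_contra hcon
            push_neg at hcon
            exact hpos ⟨τ x, hcon, hTK x hx (hC0 x hx)⟩
          have hxe : x = (-τ x) • (-w) := by rw [neg_smul_neg]; exact hx2
          rw [hxe]
          exact mem_coneHull_one _ (by simp) (by linarith)
        · intro hx
          refine coneHull_min ?_ h0 hcone hx
          intro y hy
          simp only [Finset.coe_singleton, Set.mem_singleton_iff] at hy
          rw [hy]; exact hwC'
      · -- C = {0}
        refine ⟨∅, ?_⟩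
        ext x
        constructor
        · intro hx
          have hτ : τ x = 0 := by
            rcases lt_trichotomy (τ x) 0 with h | h | h
            · exact absurd ⟨τ x, h, hTK x hx (hC0 x hx)⟩ hneg
            · exact h
            · exact absurd ⟨τ x, h, hTK x hx (hC0 x hx)⟩ hpos
          have hx0 : x = 0 := by rw [hline x hx (hC0 x hx), hτ, zero_smul]
          rw [hx0]
          exact zero_mem_coneHull _
        · intro hx
          refine coneHull_min ?_ h0 hcone hx
          intro y hy
          simp at hy

/-- Every (nonempty) closed convex cone in `ℝ²` is finitely generated. -/
theorem closed_cone_plane_fg (C : Set (Fin 2 → ℝ))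
    (hcone : ∀ u ∈ C, ∀ v ∈ C, ∀ a b : ℝ, 0 ≤ a → 0 ≤ b → a • u + b • v ∈ C)
    (hne : C.Nonempty) (hclosed : IsClosed C) :
    ∃ G : Finset (Fin 2 → ℝ), C = coneHull (G : Set (Fin 2 → ℝ)) := by
  classical
  obtain ⟨u0, hu0⟩ := hne
  have h0 : (0 : Fin 2 → ℝ) ∈ C := by
    have := hcone u0 hu0 u0 hu0 0 0 le_rfl le_rfl
    simpa using this
  have hscale : ∀ z ∈ C, ∀ r : ℝ, 0 ≤ r → r • z ∈ C := by
    intro z hz r hr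
    have := hcone z hz 0 h0 r 0 hr le_rfl
    simpa using this
  by_cases huniv : C = Set.univ
  · refine ⟨{![1,0], ![0,1], ![-1,-1]}, ?_⟩
    rw [huniv]
    ext x
    simp only [Set.mem_univ, true_iff]
    have hm : -x 0 ≤ max (max (-x 0) (-x 1)) 0 := le_max_of_le_left (le_max_left _ _)
    have hm2 : -x 1 ≤ max (max (-x 0) (-x 1)) 0 := le_max_of_le_left (le_max_right _ _)
    have hm3 : (0:ℝ) ≤ max (max (-x 0) (-x 1)) 0 := le_max_right _ _
    have hxe : x = (x 0 + max (max (-x 0) (-x 1)) 0) • (![1,0] : Fin 2 → ℝ)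
        + (x 1 + max (max (-x 0) (-x 1)) 0) • (![0,1] : Fin 2 → ℝ)
        + (max (max (-x 0) (-x 1)) 0) • (![-1,-1] : Fin 2 → ℝ) := by
      funext i
      fin_cases i <;> simp <;> ring
    rw [hxe]
    exact mem_coneHull_three _ (by simp) (by simp) (by simp) (by linarith) (by linarith) hm3
  · obtain ⟨x0, hx0⟩ := (Set.ne_univ_iff_exists_notMem C).mp huniv
    have hconv : Convex ℝ C := fun u hu v hv a b ha hb _ => hcone u hu v hv a b ha hb
    obtain ⟨f, u, hfu, hux⟩ := geometric_hahn_banach_closed_point hconv hclosed hx0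
    have hu0' : (0:ℝ) < u := by simpa using hfu 0 h0
    have hfle : ∀ y ∈ C, f y ≤ 0 := by
      intro y hy
      by_contra hcon
      push_neg at hcon
      have h1 : (u / f y) • y ∈ C := hscale y hy _ (le_of_lt (div_pos hu0' hcon))
      have h2 := hfu _ h1
      rw [map_smul, smul_eq_mul, div_mul_cancel₀ _ (ne_of_gt hcon)] at h2
      exact lt_irrefl u h2
    have hflin : ∀ y : Fin 2 → ℝ, f y = y 0 * f (Pi.single 0 1) + y 1 * f (Pi.single 1 1) := by
      intro y
      have hy : y = y 0 • (Pi.single 0 1 : Fin 2 → ℝ) + y 1 • (Pi.single 1 1 : Fin 2 → ℝ) := by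
        funext i; fin_cases i <;> simp
      conv_lhs => rw [hy]
      rw [map_add, map_smul, map_smul, smul_eq_mul, smul_eq_mul]
    set q0 := f (Pi.single 0 1) with hq0
    set q1 := f (Pi.single 1 1) with hq1
    have hn : 0 < q0^2 + q1^2 := by
      by_contra hcon
      push_neg at hcon
      have h1 : q0 = 0 := by nlinarith [sq_nonneg q0, sq_nonneg q1]
      have h2 : q1 = 0 := by nlinarith [sq_nonneg q0, sq_nonneg q1]
      have h3 := hflin x0
      rw [h1, h2] at h3
      simp at h3
      rw [h3] at hux
      linarith
    have hnne : q0^2 + q1^2 ≠ 0 := ne_of_gt hn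
    refine main_aux C hcone h0 hclosed
      ![-q0/(q0^2+q1^2), -q1/(q0^2+q1^2)] ![q1, -q0]
      (fun x => -(q0 * x 0 + q1 * x 1))
      (fun x => ((-q0) * x 1 - (-q1) * x 0)/(q0^2+q1^2)) ?_ ?_
    · intro x
      funext i
      fin_cases i <;>
      · simp only [Pi.add_apply, Pi.smul_apply, smul_eq_mul, Matrix.cons_val_zero,
          Matrix.cons_val_one, Matrix.head_cons, Fin.isValue, Fin.zero_eta, Fin.mk_one]
        field_simp
        ring
    · intro y hy
      have h := hfle y hy
      rw [hflin y] at h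
      show (0:ℝ) ≤ -(q0 * y 0 + q1 * y 1)
      nlinarith [h]
end

section
/- Let F₋₁ = 1, F₀ = 0, F_{i+1} = F_i + F_{i−1} be the Fibonacci numbers and φ = (1+√5)/2. For odd i ≥ 1, the intervals [F_i²/F_{i−2}², F_{i+2}/F_{i−2}] and [F_{i+2}/F_{i−2}, F_{i+2}²/F_i²] are nonempty and their union over odd i ≥ 1 covers [1, φ⁴); moreover F_{i+2}/F_{i−2} → φ⁴ and at the endpoints t = F_i²/F_{i−2}² one has (F_{i−2}/F_i)·t = √t. -/
/-- Shifted Fibonacci numbers: `fibm n = F_{n-1}` with the convention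
`F_{-1} = 1`, `F_0 = 0`. -/
noncomputable def fibm : ℕ → ℝ
  | 0 => 1
  | 1 => 0
  | n + 2 => fibm (n + 1) + fibm n

open Real goldenRatio

lemma fibm_cast : ∀ n, fibm (n+1) = (Nat.fib n : ℝ)
  | 0 => by simp [fibm]
  | 1 => by simp [fibm]
  | n + 2 => by
    rw [show n+2+1 = (n+1)+2 from rfl, fibm, fibm_cast (n+1), fibm_cast n,
      Nat.fib_add_two]
    push_cast; ring

lemma fibm_pos : ∀ n, n ≠ 1 → 0 < fibm n
  | 0, _ => by norm_num [fibm]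
  | 1, h => absurd rfl h
  | n + 2, _ => by
    rw [show n+2 = (n+1)+1 from rfl, fibm_cast]
    exact_mod_cast Nat.fib_pos.2 (Nat.succ_pos n)

lemma cassini : ∀ n, fibm n * fibm (n+2) = fibm (n+1)^2 + (-1:ℝ)^n
  | 0 => by norm_num [fibm]
  | n + 1 => by
    have h := cassini n
    have h2 : fibm (n+2) = fibm (n+1) + fibm n := by rw [fibm]
    have h3 : fibm (n+3) = fibm (n+2) + fibm (n+1) := by rw [show n+3 = (n+1)+2 from rfl, fibm]
    show fibm (n+1) * fibm (n+3) = fibm (n+2)^2 + (-1:ℝ)^(n+1)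
    linear_combination fibm (n+1) * h3 - fibm (n+2) * h2 - h

lemma catalan4 (n : ℕ) : fibm n * fibm (n+4) = fibm (n+2)^2 + (-1:ℝ)^n := by
  have h := cassini (n+1)
  have h2 : fibm (n+2) = fibm (n+1) + fibm n := by rw [fibm]
  have h3 : fibm (n+3) = fibm (n+2) + fibm (n+1) := by rw [show n+3 = (n+1)+2 from rfl, fibm]
  have h4 : fibm (n+4) = fibm (n+3) + fibm (n+2) := by rw [show n+4 = (n+2)+2 from rfl, fibm]
  have h' : fibm (n+1) * fibm (n+3) = fibm (n+2)^2 + (-1:ℝ)^(n+1) := h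
  linear_combination fibm n * h4 - (fibm (n+3) + fibm (n+2)) * h2 + fibm (n+2) * h3 - h'

lemma ratio_tendsto (k : ℕ) :
    Filter.Tendsto (fun n => fibm (n+1+k) / fibm (n+1)) Filter.atTop (nhds (φ^k)) := by
  have hs5 : Real.sqrt 5 ≠ 0 := by positivity
  have hgold : (0:ℝ) < φ := goldenRatio_pos
  have hr : |ψ/φ| < 1 := by
    rw [abs_div, abs_of_pos hgold, abs_of_neg goldenConj_neg, div_lt_one hgold]
    nlinarith [goldenRatio_add_goldenConj, one_lt_goldenRatio]
  have hlim : Filter.Tendsto (fun n : ℕ => (ψ/φ)^n) Filter.atTop (nhds 0) :=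
    tendsto_pow_atTop_nhds_zero_of_abs_lt_one hr
  have key : Filter.Tendsto (fun n : ℕ => (φ^k - ψ^k * (ψ/φ)^n) / (1 - (ψ/φ)^n))
      Filter.atTop (nhds (φ^k)) := by
    have h := ((tendsto_const_nhds (x := φ^k)).sub (hlim.const_mul (ψ^k))).div
      ((tendsto_const_nhds (x := (1:ℝ))).sub hlim) (by norm_num)
    simp only [mul_zero, sub_zero, div_one] at h
    exact h
  refine key.congr' ?_
  filter_upwards [Filter.eventually_ge_atTop 1] with n hn
  have hfibpos : (0:ℝ) < Nat.fib n := by exact_mod_cast Nat.fib_pos.2 hn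
  have hb : (Nat.fib n : ℝ) = (φ ^ n - ψ ^ n) / √5 := Real.coe_fib_eq n
  have hb2 : (Nat.fib (n+k) : ℝ) = (φ ^ (n+k) - ψ ^ (n+k)) / √5 := Real.coe_fib_eq (n+k)
  have hden : φ ^ n - ψ ^ n ≠ 0 := by
    intro h0
    rw [h0] at hb; simp at hb; linarith
  have hphin : (φ:ℝ)^n ≠ 0 := pow_ne_zero _ goldenRatio_ne_zero
  have hden2 : 1 - (ψ/φ)^n ≠ 0 := by
    intro h0
    apply hden
    have h1 : (ψ/φ)^n = 1 := by linarith
    rw [div_pow, div_eq_one_iff_eq hphin] at h1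
    linarith
  rw [show n+1+k = (n+k)+1 from by ring, fibm_cast, fibm_cast, hb, hb2]
  have hcancel : (φ ^ (n + k) - ψ ^ (n + k)) / √5 / ((φ ^ n - ψ ^ n) / √5)
      = (φ ^ (n + k) - ψ ^ (n + k)) / (φ ^ n - ψ ^ n) := by
    rw [div_div_div_eq, mul_comm (√5), mul_div_mul_right _ _ hs5]
  rw [hcancel]
  rw [div_eq_div_iff hden2 hden, pow_add]
  have hq : (ψ/φ)^n * φ^n = ψ^n := by rw [div_pow, div_mul_cancel₀ _ hphin]
  linear_combination (φ^k - ψ^k) * hq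

lemma S_tendsto : Filter.Tendsto (fun j : ℕ => fibm (2*j+2)^2 / fibm (2*j)^2)
    Filter.atTop (nhds (φ^4)) := by
  have hmono : Filter.Tendsto (fun j : ℕ => 2*j - 1) Filter.atTop Filter.atTop := by
    apply Filter.tendsto_atTop_atTop.mpr
    intro b; exact ⟨b+1, fun a ha => by omega⟩
  have hcomp : Filter.Tendsto (fun j : ℕ => fibm (2*j+2) / fibm (2*j))
      Filter.atTop (nhds (φ^2)) := by
    refine ((ratio_tendsto 2).comp hmono).congr' ?_
    filter_upwards [Filter.eventually_ge_atTop 1] with j hj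
    simp only [Function.comp]
    rw [show 2*j-1+1 = 2*j from by omega]
  have := hcomp.pow 2
  simp only [div_pow] at this
  convert this using 2
  ring

lemma T_tendsto : Filter.Tendsto (fun j : ℕ => fibm (2*j+4) / fibm (2*j))
    Filter.atTop (nhds (φ^4)) := by
  have hmono : Filter.Tendsto (fun j : ℕ => 2*j - 1) Filter.atTop Filter.atTop := by
    apply Filter.tendsto_atTop_atTop.mpr
    intro b; exact ⟨b+1, fun a ha => by omega⟩
  refine ((ratio_tendsto 4).comp hmono).congr' ?_
  filter_upwards [Filter.eventually_ge_atTop 1] with j hj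
  simp only [Function.comp]
  rw [show 2*j-1+1 = 2*j from by omega]

/-- For odd `i ≥ 1`, the intervals `[F_i²/F_{i-2}², F_{i+2}/F_{i-2}]` and
`[F_{i+2}/F_{i-2}, F_{i+2}²/F_i²]` are nonempty, their union covers `[1, φ⁴)`,
`F_{i+2}/F_{i-2} → φ⁴`, and at the endpoint `t = F_i²/F_{i-2}²` one has
`(F_{i-2}/F_i)·t = √t`. (Here `F_i = fibm (i+1)`.) -/
theorem fibonacci_intervals :
    (∀ i : ℕ, Odd i → 1 ≤ i →
      fibm (i+1)^2 / fibm (i-1)^2 ≤ fibm (i+3) / fibm (i-1) ∧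
      fibm (i+3) / fibm (i-1) ≤ fibm (i+3)^2 / fibm (i+1)^2) ∧
    (∀ t : ℝ, 1 ≤ t → t < ((1 + Real.sqrt 5) / 2)^4 →
      ∃ i : ℕ, Odd i ∧ 1 ≤ i ∧
        fibm (i+1)^2 / fibm (i-1)^2 ≤ t ∧ t ≤ fibm (i+3)^2 / fibm (i+1)^2) ∧
    Filter.Tendsto (fun j : ℕ => fibm (2*j+4) / fibm (2*j)) Filter.atTop
      (nhds (((1 + Real.sqrt 5) / 2)^4)) ∧
    (∀ i : ℕ, Odd i → 1 ≤ i →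
      (fibm (i-1) / fibm (i+1)) * (fibm (i+1)^2 / fibm (i-1)^2)
        = Real.sqrt (fibm (i+1)^2 / fibm (i-1)^2)) := by
  have hphi : ((1 + Real.sqrt 5) / 2 : ℝ) = φ := rfl
  refine ⟨?_, ?_, ?_, ?_⟩
  · intro i hi h1
    obtain ⟨m, hm⟩ := hi
    have ha : 0 < fibm (i-1) := fibm_pos _ (by omega)
    have hb : 0 < fibm (i+1) := fibm_pos _ (by omega)
    have hc : 0 < fibm (i+3) := fibm_pos _ (by omega)
    have hcat := catalan4 (i-1)
    have hpow : (-1:ℝ)^(i-1) = 1 := by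
      rw [show i-1 = 2*m from by omega]; exact Even.neg_one_pow ⟨m, by ring⟩
    rw [show i-1+4 = i+3 from by omega, show i-1+2 = i+1 from by omega, hpow] at hcat
    constructor
    · rw [div_le_div_iff₀ (by positivity) ha]
      nlinarith
    · rw [div_le_div_iff₀ ha (by positivity)]
      nlinarith
  · intro t ht1 ht2
    rw [hphi] at ht2
    have hex : ∃ j : ℕ, t < fibm (2*j+2)^2 / fibm (2*j)^2 := by
      have := S_tendsto.eventually (eventually_gt_nhds ht2)
      exact this.exists
    classical
    set j0 := Nat.find hex with hj0def
    have hj0 : t < fibm (2*j0+2)^2 / fibm (2*j0)^2 := Nat.find_spec hex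
    have hS0 : fibm (2*0+2)^2 / fibm (2*0)^2 = 1 := by
      norm_num [fibm]
    have hj0pos : 1 ≤ j0 := by
      rcases Nat.eq_zero_or_pos j0 with h | h
      · rw [h, hS0] at hj0; linarith
      · exact h
    have hprev : ¬ t < fibm (2*(j0-1)+2)^2 / fibm (2*(j0-1))^2 :=
      Nat.find_min hex (by omega)
    refine ⟨2*(j0-1)+1, ⟨j0-1, by ring⟩, by omega, ?_, ?_⟩
    · rw [show 2*(j0-1)+1+1 = 2*(j0-1)+2 from by omega,
        show 2*(j0-1)+1-1 = 2*(j0-1) from by omega]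
      linarith [not_lt.mp hprev]
    · rw [show 2*(j0-1)+1+3 = 2*j0+2 from by omega,
        show 2*(j0-1)+1+1 = 2*j0 from by omega]
      linarith
  · rw [hphi]; exact T_tendsto
  · intro i hi h1
    have ha : 0 < fibm (i-1) := fibm_pos _ (by rcases hi with ⟨m, hm⟩; omega)
    have hb : 0 < fibm (i+1) := fibm_pos _ (by omega)
    rw [show fibm (i+1)^2 / fibm (i-1)^2 = (fibm (i+1) / fibm (i-1))^2 from (div_pow _ _ _).symm,
      Real.sqrt_sq (by positivity)]
    field_simp
end
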